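/- Let n ≥ 2, χ > 0, δ ∈ (0,1), M > 0 with M ≤ 2(1−δ)/((2 + 1/(1−δ))(n + 2δ)χ), and let p satisfy 1 < p ≤ n/2 + δ. Set β = sqrt(χ(p−1)/(4M)) and φ(s) = exp((βs)²). Then for all s ∈ [0, M]: (2p/((p−1)(1−δ)))·(φ'(s))²/φ(s) + (χ²(p−1)p/2)·φ(s) + χp·φ'(s) ≤ (1−δ)·φ''(s). -/

import Mathlib

set_option maxHeartbeats 1000000 in

theorem pointwise_absorption (n : ℕ) (hn : 2 ≤ n) (χ δ M p : ℝ)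
    (hχ : 0 < χ) (hδ0 : 0 < δ) (hδ1 : δ < 1) (hM0 : 0 < M)
    (hM : M ≤ 2 * (1 - δ) / ((2 + 1 / (1 - δ)) * ((n : ℝ) + 2 * δ) * χ))
    (hp1 : 1 < p) (hp2 : p ≤ (n : ℝ) / 2 + δ)
    (β : ℝ) (hβ : β = Real.sqrt (χ * (p - 1) / (4 * M)))
    (φ : ℝ → ℝ) (hφ : φ = fun s => Real.exp ((β * s) ^ 2)) :
    ∀ s : ℝ, s ∈ Set.Icc 0 M →
      2 * p / ((p - 1) * (1 - δ)) * (deriv φ s) ^ 2 / φ s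
        + χ ^ 2 * (p - 1) * p / 2 * φ s
        + χ * p * deriv φ s
      ≤ (1 - δ) * deriv (deriv φ) s := by
  have hu : 0 < 1 - δ := by linarith
  have hp0 : 0 < p - 1 := by linarith
  have hb2 : β ^ 2 = χ * (p - 1) / (4 * M) := by
    rw [hβ, Real.sq_sqrt]; positivity
  -- derivatives
  have hexp : ∀ s : ℝ, HasDerivAt φ (φ s * (2 * β ^ 2 * s)) s := by
    intro s
    have h : HasDerivAt (fun s : ℝ => (β * s) ^ 2) (2 * β ^ 2 * s) s := by
      have : HasDerivAt (fun s : ℝ => (β * s) ^ 2) _ s := ((hasDerivAt_id s).const_mul β).fun_pow 2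
      convert this using 1
      simp [id]; ring
    rw [hφ]
    simpa using h.exp
  have hd1 : deriv φ = fun s => φ s * (2 * β ^ 2 * s) := funext fun s => (hexp s).deriv
  have hd2 : ∀ s : ℝ, deriv (deriv φ) s
      = φ s * (2 * β ^ 2 * s) * (2 * β ^ 2 * s) + φ s * (2 * β ^ 2) := by
    intro s
    rw [hd1]
    have := ((hexp s).fun_mul (((hasDerivAt_id s).const_mul (2 * β ^ 2)))).deriv
    simpa [id] using this
  intro s hs
  obtain ⟨hs0, hsM⟩ := hs
  rw [hd2, hd1]
  simp only
  have hE : 0 < φ s := by rw [hφ]; positivity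
  -- key inequality from hM
  have hkey : χ * p * M * (2 * (1 - δ) + 1) ≤ (1 - δ) ^ 2 := by
    have hn2 : (0:ℝ) < (n : ℝ) + 2 * δ := by positivity
    have hC : 0 < (2 + 1 / (1 - δ)) * ((n : ℝ) + 2 * δ) * χ := by positivity
    have h1 : M * ((2 + 1 / (1 - δ)) * ((n : ℝ) + 2 * δ) * χ) ≤ 2 * (1 - δ) := by
      rw [← le_div_iff₀ hC]; exact hM
    have h2 : 2 * p ≤ (n : ℝ) + 2 * δ := by linarith
    have h3 : (2 + 1 / (1 - δ)) = (2 * (1 - δ) + 1) / (1 - δ) := by field_simp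
    rw [h3] at h1
    have h4 : M * ((2 * (1 - δ) + 1) / (1 - δ) * ((n : ℝ) + 2 * δ) * χ)
        = M * (2 * (1 - δ) + 1) * ((n : ℝ) + 2 * δ) * χ / (1 - δ) := by ring
    rw [h4, div_le_iff₀ hu] at h1
    nlinarith [mul_pos hM0 hχ, mul_pos (mul_pos hM0 hχ) hu]
  set b := β ^ 2 with hbdef
  clear_value b
  have hb0 : 0 < b := by rw [hb2]; positivity
  have hbM : b * M = χ * (p - 1) / 4 := by
    rw [hb2]; field_simp
  have hbs : b * s ≤ χ * (p - 1) / 4 := by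
    calc b * s ≤ b * M := by nlinarith
    _ = _ := hbM
  have hbs0 : 0 ≤ b * s := by positivity
  -- core coefficient inequality
  have e1 : 2 * p / ((p - 1) * (1 - δ)) * (2 * b * s) ^ 2 ≤ p * χ ^ 2 * (p - 1) / (2 * (1 - δ)) := by
    have h : (2 * b * s) ^ 2 ≤ (χ * (p - 1) / 2) ^ 2 := by nlinarith
    calc 2 * p / ((p - 1) * (1 - δ)) * (2 * b * s) ^ 2
        ≤ 2 * p / ((p - 1) * (1 - δ)) * (χ * (p - 1) / 2) ^ 2 := by
          apply mul_le_mul_of_nonneg_left h (by positivity)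
      _ = p * χ ^ 2 * (p - 1) / (2 * (1 - δ)) := by field_simp
  have e3 : χ * p * (2 * b * s) ≤ χ ^ 2 * p * (p - 1) / 2 := by nlinarith
  have e4 : p * χ ^ 2 * (p - 1) / (2 * (1 - δ)) + χ ^ 2 * (p - 1) * p / 2
      + χ ^ 2 * p * (p - 1) / 2 ≤ (1 - δ) * (2 * b) := by
    have h5 := mul_le_mul_of_nonneg_left hkey
      (by positivity : (0:ℝ) ≤ χ * (p - 1) / (2 * (1 - δ) * M))
    calc p * χ ^ 2 * (p - 1) / (2 * (1 - δ)) + χ ^ 2 * (p - 1) * p / 2 + χ ^ 2 * p * (p - 1) / 2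
        = χ * (p - 1) / (2 * (1 - δ) * M) * (χ * p * M * (2 * (1 - δ) + 1)) := by
          field_simp; ring
      _ ≤ χ * (p - 1) / (2 * (1 - δ) * M) * ((1 - δ) ^ 2) := h5
      _ = (1 - δ) * (2 * b) := by rw [hb2]; field_simp; ring
  have core : 2 * p / ((p - 1) * (1 - δ)) * (2 * b * s) ^ 2 + χ ^ 2 * (p - 1) * p / 2
      + χ * p * (2 * b * s) ≤ (1 - δ) * ((2 * b * s) * (2 * b * s) + 2 * b) := by
    have h6 : 0 ≤ (1 - δ) * (2 * b * s) * (2 * b * s) := by positivity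
    linarith [e1, e3, e4, h6]
  calc 2 * p / ((p - 1) * (1 - δ)) * (φ s * (2 * b * s)) ^ 2 / φ s
        + χ ^ 2 * (p - 1) * p / 2 * φ s + χ * p * (φ s * (2 * b * s))
      = φ s * (2 * p / ((p - 1) * (1 - δ)) * (2 * b * s) ^ 2 + χ ^ 2 * (p - 1) * p / 2
          + χ * p * (2 * b * s)) := by
        field_simp
    _ ≤ φ s * ((1 - δ) * ((2 * b * s) * (2 * b * s) + 2 * b)) :=
        mul_le_mul_of_nonneg_left core hE.le
    _ = (1 - δ) * (φ s * (2 * b * s) * (2 * b * s) + φ s * (2 * b)) := by ring
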